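/- Let α be a complex number, k a positive integer, and x a complex number with |x| < 1. As γ → -k (with γ avoiding the nonpositive integers and 0), the value ₂F₁(α, 1+γ; γ; x) = ∑_{n=0}^∞ [(α)_n (1+γ)_n / ((γ)_n n!)] x^n tends to ∑_{n=0}^{k-1} [(α)_n (1-k)_n / ((-k)_n n!)] x^n - [(α)_{k+1} / (k · (k+1)!)] · x^{k+1} · ₂F₁(α+k+1, 2; k+2; x). -/

import Mathlib

open Filter Polynomial

lemma poch_prod (c : ℂ) (n : ℕ) :
    (ascPochhammer ℂ n).eval c = ∏ i ∈ Finset.range n, (c + i) := by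
  induction n with
  | zero => simp
  | succ n ih => rw [ascPochhammer_succ_eval, ih, Finset.prod_range_succ]

lemma poch_shift (γ : ℂ) (n : ℕ) :
    γ * (ascPochhammer ℂ n).eval (1 + γ) = (ascPochhammer ℂ n).eval γ * (γ + n) := by
  have h1 : (ascPochhammer ℂ (n+1)).eval γ = γ * (ascPochhammer ℂ n).eval (γ + 1) := by
    rw [ascPochhammer_succ_left]
    simp [eval_comp]
  rw [add_comm 1 γ, ← h1, ascPochhammer_succ_eval]

lemma term_eq (α x γ : ℂ) (n : ℕ) (hγ : γ ≠ 0)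
    (hQ : (ascPochhammer ℂ n).eval γ ≠ 0) :
    (ascPochhammer ℂ n).eval α * (ascPochhammer ℂ n).eval (1 + γ) /
      ((ascPochhammer ℂ n).eval γ * (n.factorial : ℂ)) * x ^ n
    = (ascPochhammer ℂ n).eval α * x ^ n / (n.factorial : ℂ)
      + γ⁻¹ * ((n : ℂ) * ((ascPochhammer ℂ n).eval α * x ^ n / (n.factorial : ℂ))) := by
  have hf : (n.factorial : ℂ) ≠ 0 := Nat.cast_ne_zero.2 n.factorial_ne_zero
  have h := poch_shift γ n
  field_simp
  linear_combination ((ascPochhammer ℂ n).eval α * x ^ n) * h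

lemma poch_two (m : ℕ) : (ascPochhammer ℂ m).eval 2 = ((m+1).factorial : ℂ) := by
  induction m with
  | zero => simp
  | succ m ih =>
    rw [ascPochhammer_succ_eval, ih]
    push_cast [Nat.factorial_succ]
    ring

lemma poch_k2 (k m : ℕ) :
    (ascPochhammer ℂ m).eval ((k : ℂ) + 2) * ((k+1).factorial : ℂ)
      = ((k + 1 + m).factorial : ℂ) := by
  induction m with
  | zero => simp
  | succ m ih =>
    have hfac : ((k+1+(m+1)).factorial : ℂ) = ((k+1+m).factorial : ℂ) * ((k:ℂ)+2+m) := by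
      rw [show k+1+(m+1) = (k+1+m)+1 by omega, Nat.factorial_succ]
      push_cast; ring
    rw [ascPochhammer_succ_eval, hfac, ← ih]
    ring

lemma poch_split (α : ℂ) (k m : ℕ) :
    (ascPochhammer ℂ (k + 1 + m)).eval α
      = (ascPochhammer ℂ (k+1)).eval α * (ascPochhammer ℂ m).eval (α + (k:ℂ) + 1) := by
  have := ascPochhammer_mul (S := ℂ) (k+1) m
  have h2 := congrArg (Polynomial.eval α) this
  simp only [eval_mul, eval_comp, eval_add, eval_X, eval_natCast] at h2
  rw [← h2]
  push_cast
  ring_nf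

lemma ratio_step (α x : ℂ) {r : ℝ} (hxr : ‖x‖ < r) (n : ℕ)
    (hn : ‖α‖ * ‖x‖ / (r - ‖x‖) ≤ n) :
    (‖α‖ + n) * ‖x‖ ≤ r * n := by
  have h0 : (0:ℝ) < r - ‖x‖ := by linarith
  have h1 : ‖α‖ * ‖x‖ ≤ n * (r - ‖x‖) := by
    rw [div_le_iff₀ h0] at hn; linarith
  nlinarith [norm_nonneg x, norm_nonneg α]

lemma summable_T (α x : ℂ) (hx : ‖x‖ < 1) :
    Summable (fun n : ℕ => (ascPochhammer ℂ n).eval α * x ^ n / (n.factorial : ℂ)) := by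
  set r : ℝ := (1 + ‖x‖)/2 with hr
  have hxr : ‖x‖ < r := by rw [hr]; linarith
  have hr1 : r < 1 := by rw [hr]; linarith
  apply summable_of_ratio_norm_eventually_le hr1
  rw [eventually_atTop]
  refine ⟨⌈‖α‖ * ‖x‖ / (r - ‖x‖)⌉₊ + 1, fun n hn => ?_⟩
  have hn' : ‖α‖ * ‖x‖ / (r - ‖x‖) ≤ n :=
    le_trans (Nat.le_ceil _) (by exact_mod_cast Nat.le_of_succ_le hn)
  have hf : (n.factorial : ℂ) ≠ 0 := Nat.cast_ne_zero.2 n.factorial_ne_zero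
  have h1 : ((n:ℂ) + 1) ≠ 0 := by
    have : ((n+1:ℕ):ℂ) ≠ 0 := Nat.cast_ne_zero.2 (Nat.succ_ne_zero n)
    push_cast at this; exact this
  have e : (ascPochhammer ℂ (n+1)).eval α * x ^ (n+1) / ((n+1).factorial : ℂ)
      = (ascPochhammer ℂ n).eval α * x ^ n / (n.factorial : ℂ) * ((α + n) * x / ((n:ℂ)+1)) := by
    rw [ascPochhammer_succ_eval, pow_succ, Nat.factorial_succ]
    push_cast
    field_simp
  rw [e, norm_mul]
  have hq : ‖(α + (n:ℂ)) * x / ((n:ℂ)+1)‖ ≤ r := by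
    rw [norm_div, norm_mul]
    have hden : ‖((n:ℂ)+1)‖ = (n:ℝ) + 1 := by
      rw [show ((n:ℂ)+1) = ((n+1 : ℕ) : ℂ) by push_cast; ring, Complex.norm_natCast]
      push_cast; ring
    rw [hden, div_le_iff₀ (by positivity)]
    have hb : ‖α + (n:ℂ)‖ ≤ ‖α‖ + n := by
      calc ‖α + (n:ℂ)‖ ≤ ‖α‖ + ‖(n:ℂ)‖ := norm_add_le _ _
      _ = ‖α‖ + n := by simp [Complex.norm_natCast]
    have := ratio_step α x hxr n hn'
    have hxnn := norm_nonneg x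
    have hr0 : 0 < r := lt_of_le_of_lt (norm_nonneg x) hxr
    calc ‖α + (n:ℂ)‖ * ‖x‖ ≤ (‖α‖ + n) * ‖x‖ := by
          exact mul_le_mul_of_nonneg_right hb hxnn
      _ ≤ r * n := this
      _ ≤ r * ((n:ℝ)+1) := by nlinarith
  calc ‖(ascPochhammer ℂ n).eval α * x ^ n / (n.factorial : ℂ)‖ * ‖(α + (n:ℂ)) * x / ((n:ℂ)+1)‖
      ≤ ‖(ascPochhammer ℂ n).eval α * x ^ n / (n.factorial : ℂ)‖ * r :=
        mul_le_mul_of_nonneg_left hq (norm_nonneg _)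
    _ = r * ‖(ascPochhammer ℂ n).eval α * x ^ n / (n.factorial : ℂ)‖ := mul_comm _ _

lemma summable_nT (α x : ℂ) (hx : ‖x‖ < 1) :
    Summable (fun n : ℕ => (n:ℂ) * ((ascPochhammer ℂ n).eval α * x ^ n / (n.factorial : ℂ))) := by
  set r : ℝ := (1 + ‖x‖)/2 with hr
  have hxr : ‖x‖ < r := by rw [hr]; linarith
  have hr1 : r < 1 := by rw [hr]; linarith
  apply summable_of_ratio_norm_eventually_le hr1
  rw [eventually_atTop]
  refine ⟨⌈‖α‖ * ‖x‖ / (r - ‖x‖)⌉₊ + 1, fun n hn => ?_⟩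
  have hn' : ‖α‖ * ‖x‖ / (r - ‖x‖) ≤ n :=
    le_trans (Nat.le_ceil _) (by exact_mod_cast Nat.le_of_succ_le hn)
  have hnpos : 0 < n := Nat.lt_of_lt_of_le (Nat.succ_pos _) hn
  have hn0 : ((n:ℂ)) ≠ 0 := Nat.cast_ne_zero.2 hnpos.ne'
  have hf : (n.factorial : ℂ) ≠ 0 := Nat.cast_ne_zero.2 n.factorial_ne_zero
  have h1 : ((n:ℂ) + 1) ≠ 0 := by
    have : ((n+1:ℕ):ℂ) ≠ 0 := Nat.cast_ne_zero.2 (Nat.succ_ne_zero n)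
    push_cast at this; exact this
  have e : ((n:ℂ)+1) * ((ascPochhammer ℂ (n+1)).eval α * x ^ (n+1) / ((n+1).factorial : ℂ))
      = (n:ℂ) * ((ascPochhammer ℂ n).eval α * x ^ n / (n.factorial : ℂ)) * ((α + n) * x / (n:ℂ)) := by
    rw [ascPochhammer_succ_eval, pow_succ, Nat.factorial_succ]
    push_cast
    field_simp
  have e2 : (((n+1:ℕ)):ℂ) * ((ascPochhammer ℂ (n+1)).eval α * x ^ (n+1) / ((n+1).factorial : ℂ))
      = (n:ℂ) * ((ascPochhammer ℂ n).eval α * x ^ n / (n.factorial : ℂ)) * ((α + n) * x / (n:ℂ)) := by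
    push_cast; exact e
  rw [e2, norm_mul]
  have hq : ‖(α + (n:ℂ)) * x / (n:ℂ)‖ ≤ r := by
    rw [norm_div, norm_mul]
    have hden : ‖((n:ℂ))‖ = (n:ℝ) := by simp [Complex.norm_natCast]
    rw [hden, div_le_iff₀ (by exact_mod_cast hnpos)]
    have hb : ‖α + (n:ℂ)‖ ≤ ‖α‖ + n := by
      calc ‖α + (n:ℂ)‖ ≤ ‖α‖ + ‖(n:ℂ)‖ := norm_add_le _ _
      _ = ‖α‖ + n := by simp [Complex.norm_natCast]
    have := ratio_step α x hxr n hn'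
    calc ‖α + (n:ℂ)‖ * ‖x‖ ≤ (‖α‖ + n) * ‖x‖ :=
          mul_le_mul_of_nonneg_right hb (norm_nonneg x)
      _ ≤ r * n := this
  calc ‖(n:ℂ) * ((ascPochhammer ℂ n).eval α * x ^ n / (n.factorial : ℂ))‖ * ‖(α + (n:ℂ)) * x / (n:ℂ)‖
      ≤ ‖(n:ℂ) * ((ascPochhammer ℂ n).eval α * x ^ n / (n.factorial : ℂ))‖ * r :=
        mul_le_mul_of_nonneg_left hq (norm_nonneg _)
    _ = r * ‖(n:ℂ) * ((ascPochhammer ℂ n).eval α * x ^ n / (n.factorial : ℂ))‖ := mul_comm _ _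


/-- As `γ → -k` (avoiding nonpositive integers), `₂F₁(α, 1+γ; γ; x)` tends to
`∑_{n=0}^{k-1} (α)_n (1-k)_n / ((-k)_n n!) x^n
  - ((α)_{k+1} / (k (k+1)!)) x^{k+1} ₂F₁(α+k+1, 2; k+2; x)`. -/
theorem limit_of_hypergeometric_as_gamma_to_neg_k (α x : ℂ) (k : ℕ) (hk : 1 ≤ k)
    (hx : ‖x‖ < 1) :
    Tendsto
      (fun γ : ℂ => ∑' n : ℕ,
        ((ascPochhammer ℂ n).eval α * (ascPochhammer ℂ n).eval (1 + γ) /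
          ((ascPochhammer ℂ n).eval γ * (n.factorial : ℂ))) * x ^ n)
      (nhdsWithin (-(k : ℂ)) {γ : ℂ | ∀ m : ℕ, γ ≠ -(m : ℂ)})
      (nhds
        ((∑ n ∈ Finset.range k,
          ((ascPochhammer ℂ n).eval α * (ascPochhammer ℂ n).eval (1 - (k : ℂ)) /
            ((ascPochhammer ℂ n).eval (-(k : ℂ)) * (n.factorial : ℂ))) * x ^ n)
        - ((ascPochhammer ℂ (k + 1)).eval α / ((k : ℂ) * ((k + 1).factorial : ℂ))) * x ^ (k + 1) *
          ∑' n : ℕ, ((ascPochhammer ℂ n).eval (α + (k : ℂ) + 1) * (ascPochhammer ℂ n).eval 2 /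
            ((ascPochhammer ℂ n).eval ((k : ℂ) + 2) * (n.factorial : ℂ))) * x ^ n)) := by
  have hk0 : ((k:ℂ)) ≠ 0 := Nat.cast_ne_zero.2 (by omega)
  have hknz : (-(k:ℂ)) ≠ 0 := neg_ne_zero.2 hk0
  set T : ℕ → ℂ := fun n => (ascPochhammer ℂ n).eval α * x ^ n / (n.factorial : ℂ) with hTdef
  have hsT : Summable T := summable_T α x hx
  have hsNT : Summable (fun n : ℕ => (n:ℂ) * T n) := summable_nT α x hx
  set A := ∑' n, T n with hA
  set B := ∑' n : ℕ, (n:ℂ) * T n with hB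
  -- Step 1: value identity
  have hval :
      (∑ n ∈ Finset.range k,
          ((ascPochhammer ℂ n).eval α * (ascPochhammer ℂ n).eval (1 - (k : ℂ)) /
            ((ascPochhammer ℂ n).eval (-(k : ℂ)) * (n.factorial : ℂ))) * x ^ n)
        - ((ascPochhammer ℂ (k + 1)).eval α / ((k : ℂ) * ((k + 1).factorial : ℂ))) * x ^ (k + 1) *
          ∑' n : ℕ, ((ascPochhammer ℂ n).eval (α + (k : ℂ) + 1) * (ascPochhammer ℂ n).eval 2 /
            ((ascPochhammer ℂ n).eval ((k : ℂ) + 2) * (n.factorial : ℂ))) * x ^ n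
      = A + (-(k:ℂ))⁻¹ * B := by
    set S : ℕ → ℂ := fun n => T n + (-(k:ℂ))⁻¹ * ((n:ℂ) * T n) with hSdef
    have hsS : Summable S := hsT.add (hsNT.mul_left _)
    have h1 : ∑' n, S n = A + (-(k:ℂ))⁻¹ * B := by
      have := Summable.tsum_add hsT (hsNT.mul_left ((-(k:ℂ))⁻¹))
      rw [tsum_mul_left] at this
      exact this
    have h2 : (∑ n ∈ Finset.range (k+1), S n) + ∑' m, S (m + (k+1)) = ∑' n, S n :=
      Summable.sum_add_tsum_nat_add (k+1) hsS
    have hSk : S k = 0 := by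
      simp only [hSdef]
      field_simp
      ring
    have hfin : ∑ n ∈ Finset.range (k+1), S n = ∑ n ∈ Finset.range k, S n := by
      rw [Finset.sum_range_succ, hSk, add_zero]
    have hfin2 : ∑ n ∈ Finset.range k,
        ((ascPochhammer ℂ n).eval α * (ascPochhammer ℂ n).eval (1 - (k : ℂ)) /
          ((ascPochhammer ℂ n).eval (-(k : ℂ)) * (n.factorial : ℂ))) * x ^ n
        = ∑ n ∈ Finset.range k, S n := by
      refine Finset.sum_congr rfl fun n hn => ?_
      rw [Finset.mem_range] at hn
      have hQ : (ascPochhammer ℂ n).eval (-(k:ℂ)) ≠ 0 := by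
        rw [poch_prod]
        refine Finset.prod_ne_zero_iff.2 fun i hi => ?_
        rw [Finset.mem_range] at hi
        intro h
        have : (i:ℂ) = (k:ℂ) := by linear_combination h
        have : i = k := Nat.cast_injective this
        omega
      have hrw : (1 - (k:ℂ)) = 1 + (-(k:ℂ)) := by ring
      rw [hrw]
      exact term_eq α x (-(k:ℂ)) n hknz hQ
    have htail : ∀ m : ℕ, S (m + (k+1)) =
        (-(((ascPochhammer ℂ (k + 1)).eval α / ((k : ℂ) * ((k + 1).factorial : ℂ))) * x ^ (k + 1)))
          * (((ascPochhammer ℂ m).eval (α + (k : ℂ) + 1) * (ascPochhammer ℂ m).eval 2 /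
            ((ascPochhammer ℂ m).eval ((k : ℂ) + 2) * (m.factorial : ℂ))) * x ^ m) := by
      intro m
      have hidx : m + (k+1) = k + 1 + m := by omega
      have hfm : (m.factorial : ℂ) ≠ 0 := Nat.cast_ne_zero.2 m.factorial_ne_zero
      have hfk1 : ((k+1).factorial : ℂ) ≠ 0 := Nat.cast_ne_zero.2 (k+1).factorial_ne_zero
      have hfkm : ((k+1+m).factorial : ℂ) ≠ 0 := Nat.cast_ne_zero.2 (k+1+m).factorial_ne_zero
      have hE : (ascPochhammer ℂ m).eval ((k:ℂ)+2) ≠ 0 := by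
        intro h
        rw [← poch_k2 k m, h, zero_mul] at hfkm
        exact hfkm rfl
      have hEq : ((k+1+m).factorial : ℂ)
          = (ascPochhammer ℂ m).eval ((k:ℂ)+2) * ((k+1).factorial : ℂ) := (poch_k2 k m).symm
      simp only [hSdef, hTdef, hidx]
      rw [poch_split, poch_two, hEq, pow_add]
      have hms : ((m+1).factorial : ℂ) = ((m:ℂ)+1) * (m.factorial : ℂ) := by
        rw [Nat.factorial_succ]; push_cast; ring
      rw [hms]
      have hcast : ((k+1+m : ℕ) : ℂ) = (k:ℂ) + 1 + (m:ℂ) := by push_cast; ring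
      rw [hcast]
      field_simp
      ring
    have htailsum : ∑' m, S (m + (k+1)) =
        (-(((ascPochhammer ℂ (k + 1)).eval α / ((k : ℂ) * ((k + 1).factorial : ℂ))) * x ^ (k + 1)))
          * ∑' m : ℕ, (((ascPochhammer ℂ m).eval (α + (k : ℂ) + 1) * (ascPochhammer ℂ m).eval 2 /
            ((ascPochhammer ℂ m).eval ((k : ℂ) + 2) * (m.factorial : ℂ))) * x ^ m) := by
      rw [tsum_congr htail, tsum_mul_left]
    rw [← h1, ← h2, hfin, ← hfin2, htailsum]
    ring
  rw [hval]
  -- Step 2: the limit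
  have hcont : ContinuousAt (fun γ : ℂ => A + γ⁻¹ * B) (-(k:ℂ)) :=
    continuousAt_const.add ((continuousAt_inv₀ hknz).mul continuousAt_const)
  have hlim : Tendsto (fun γ : ℂ => A + γ⁻¹ * B)
      (nhdsWithin (-(k : ℂ)) {γ : ℂ | ∀ m : ℕ, γ ≠ -(m : ℂ)}) (nhds (A + (-(k:ℂ))⁻¹ * B)) :=
    hcont.continuousWithinAt
  refine hlim.congr' ?_
  filter_upwards [self_mem_nhdsWithin] with γ hγ
  have hγ0 : γ ≠ 0 := by
    have := hγ 0
    simpa using this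
  have hQ : ∀ n : ℕ, (ascPochhammer ℂ n).eval γ ≠ 0 := by
    intro n
    rw [poch_prod]
    refine Finset.prod_ne_zero_iff.2 fun i _ => ?_
    intro h
    exact hγ i (by linear_combination h)
  have hterms : ∀ n : ℕ,
      ((ascPochhammer ℂ n).eval α * (ascPochhammer ℂ n).eval (1 + γ) /
        ((ascPochhammer ℂ n).eval γ * (n.factorial : ℂ))) * x ^ n
      = T n + γ⁻¹ * ((n:ℂ) * T n) := fun n => term_eq α x γ n hγ0 (hQ n)
  rw [tsum_congr hterms]
  have := Summable.tsum_add hsT (hsNT.mul_left (γ⁻¹))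
  rw [tsum_mul_left] at this
  exact this.symm
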